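/- There exists a real constant (namely the Euler–Mascheroni constant γ) such that the partial sums of the harmonic series satisfy H_n = γ + log(n + 1/2) + 1/(24n²) + O(1/n³) as n → ∞; precisely, there exist constants A > 0 and N such that for all n ≥ N, |H_n − γ − log(n + 1/2) − 1/(24n²)| ≤ A/n³. -/

import Mathlib

open Finset Filter

/-- `H n` is the `n`-th partial sum of the harmonic series. -/
noncomputable def H (n : ℕ) : ℝ := ∑ j ∈ Finset.Icc 1 n, (1 : ℝ) / j

noncomputable def fE (n : ℕ) : ℝ :=
  H n - Real.log ((n : ℝ) + 1/2) - 1 / (24 * (n : ℝ)^2)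

lemma H_succ (n : ℕ) : H (n+1) = H n + 1/((n:ℝ)+1) := by
  unfold H
  rw [Finset.sum_Icc_succ_top (by omega)]
  push_cast
  ring

lemma tele (g : ℕ → ℝ) (n m : ℕ) (h : n ≤ m) :
    g m - g n = ∑ k ∈ Finset.Ico n m, (g (k+1) - g k) := by
  induction m, h using Nat.le_induction with
  | base => simp
  | succ m hm ih =>
      rw [Finset.sum_Ico_succ_top (by omega), ← ih]
      ring

lemma log_expand (n : ℕ) (hn : 1 ≤ n) :
    |Real.log (((n:ℝ)+1) + 1/2) - Real.log ((n:ℝ) + 1/2)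
      - 1/((n:ℝ)+1) - 1/(12*((n:ℝ)+1)^3)| ≤ 1/(6*(n:ℝ)^4) := by
  have hn1 : (1:ℝ) ≤ (n:ℝ) := by exact_mod_cast hn
  set m : ℝ := (n:ℝ) + 1 with hm
  have hm2 : (2:ℝ) ≤ m := by rw [hm]; linarith
  have hm0 : m ≠ 0 := by positivity
  set x : ℝ := 1/(2*m) with hx
  have hx0 : 0 < x := by positivity
  have hx4 : x ≤ 1/4 := by
    rw [hx, div_le_div_iff₀ (by positivity) (by norm_num)]
    linarith
  have h1x0 : (0:ℝ) < 1 + x := by linarith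
  have h2x0 : (0:ℝ) < 1 - x := by linarith
  have h1 : m + 1/2 = m * (1+x) := by rw [hx]; field_simp
  have h2 : (n:ℝ) + 1/2 = m * (1-x) := by rw [hx, hm]; field_simp; ring
  have habs : |x| < 1 := by rw [abs_of_pos hx0]; linarith
  have habs' : |(-x)| < 1 := by rwa [abs_neg]
  have hA := Real.abs_log_sub_add_sum_range_le habs 3
  have hB := Real.abs_log_sub_add_sum_range_le habs' 3
  simp only [Finset.sum_range_succ, Finset.sum_range_zero] at hA hB
  rw [abs_of_pos hx0] at hA
  rw [abs_neg, abs_of_pos hx0, sub_neg_eq_add] at hB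
  norm_num at hA hB
  have key : |Real.log (1+x) - Real.log (1-x) - 2*x - (2/3)*x^3|
      ≤ 2 * (x^4/(1-x)) := by
    have hPQ : Real.log (1+x) - Real.log (1-x) - 2*x - (2/3)*x^3
        = ((-x + x^2/2 - x^3/3) + Real.log (1+x))
          - ((x + x^2/2 + x^3/3) + Real.log (1-x)) := by ring
    rw [hPQ]
    refine (abs_sub _ _).trans ?_
    have e1 : |(-x + x^2/2 - x^3/3) + Real.log (1+x)| ≤ x^4/(1-x) := by
      have heq : (-x + x^2/2 - x^3/3) + Real.log (1+x)
          = -x + x^2/2 + (-x)^3/3 + Real.log (1+x) := by ring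
      rw [heq]; exact hB
    have e2 : |(x + x^2/2 + x^3/3) + Real.log (1-x)| ≤ x^4/(1-x) := by
      have heq : (x + x^2/2 + x^3/3) + Real.log (1-x)
          = x + x^2/2 + x^3/3 + Real.log (1-x) := by ring
      rw [heq]; exact hA
    linarith
  have hrw : Real.log (m + 1/2) - Real.log ((n:ℝ)+1/2) - 1/m - 1/(12*m^3)
      = Real.log (1+x) - Real.log (1-x) - 2*x - (2/3)*x^3 := by
    rw [h1, h2, Real.log_mul hm0 h1x0.ne', Real.log_mul hm0 h2x0.ne']
    have e1 : 1/m = 2*x := by rw [hx]; field_simp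
    have e2 : 1/(12*m^3) = (2/3)*x^3 := by rw [hx]; field_simp; ring
    rw [e1, e2]; ring
  have hfin : 2 * (x^4/(1-x)) ≤ 1/(6*(n:ℝ)^4) := by
    have h34 : (3:ℝ)/4 ≤ 1 - x := by linarith
    have hd : x^4/(1-x) ≤ x^4/(3/4) :=
      div_le_div_of_nonneg_left (by positivity) (by norm_num) h34
    have hxn : x ≤ 1/(2*(n:ℝ)) := by
      rw [hx]
      apply div_le_div_of_nonneg_left (by norm_num) (by positivity)
      rw [hm]; linarith
    have hx4n : x^4 ≤ (1/(2*(n:ℝ)))^4 := pow_le_pow_left₀ hx0.le hxn 4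
    have hval : (1/(2*(n:ℝ)))^4 = 1/(16*(n:ℝ)^4) := by
      field_simp; ring
    rw [hval] at hx4n
    have hpn : (0:ℝ) < (n:ℝ)^4 := by positivity
    calc 2 * (x^4/(1-x)) ≤ 2 * (x^4/(3/4)) := by linarith
      _ = (8/3) * x^4 := by ring
      _ ≤ (8/3) * (1/(16*(n:ℝ)^4)) := by linarith
      _ = 1/(6*(n:ℝ)^4) := by field_simp; ring
  calc |Real.log (((n:ℝ)+1) + 1/2) - Real.log ((n:ℝ) + 1/2)
      - 1/((n:ℝ)+1) - 1/(12*((n:ℝ)+1)^3)|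
      = |Real.log (1+x) - Real.log (1-x) - 2*x - (2/3)*x^3| := by
        rw [← hrw]
    _ ≤ 2 * (x^4/(1-x)) := key
    _ ≤ 1/(6*(n:ℝ)^4) := hfin

lemma step_bound (n : ℕ) (hn : 1 ≤ n) : |fE (n+1) - fE n| ≤ 1/(3*(n:ℝ)^4) := by
  have hlog := log_expand n hn
  have hpos : (0:ℝ) < (n:ℝ) := by exact_mod_cast hn
  have hdiff : fE (n+1) - fE n =
      -(Real.log (((n:ℝ)+1) + 1/2) - Real.log ((n:ℝ)+1/2)
          - 1/((n:ℝ)+1) - 1/(12*((n:ℝ)+1)^3))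
      + (3*(n:ℝ)+1)/(24*(n:ℝ)^2*((n:ℝ)+1)^3) := by
    unfold fE
    rw [H_succ n]
    push_cast
    field_simp
    ring
  rw [hdiff]
  have h2 : |(3*(n:ℝ)+1)/(24*(n:ℝ)^2*((n:ℝ)+1)^3)|
      = (3*(n:ℝ)+1)/(24*(n:ℝ)^2*((n:ℝ)+1)^3) := abs_of_pos (by positivity)
  have h3 : (3*(n:ℝ)+1)/(24*(n:ℝ)^2*((n:ℝ)+1)^3) ≤ 1/(6*(n:ℝ)^4) := by
    rw [div_le_div_iff₀ (by positivity) (by positivity)]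
    nlinarith [hpos, pow_pos hpos 2, pow_pos hpos 3, pow_pos hpos 4]
  have heq : 1/(6*(n:ℝ)^4) + 1/(6*(n:ℝ)^4) = 1/(3*(n:ℝ)^4) := by
    field_simp
    ring
  refine (abs_add_le _ _).trans ?_
  rw [abs_neg, h2]
  linarith

lemma cauchy_bound {n m : ℕ} (h2 : 2 ≤ n) (hnm : n ≤ m) :
    |fE m - fE n| ≤ 1/(n:ℝ)^3 := by
  have hn1 : (2:ℝ) ≤ (n:ℝ) := by exact_mod_cast h2
  have hm1 : (2:ℝ) ≤ (m:ℝ) := by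
    have : (n:ℝ) ≤ (m:ℝ) := by exact_mod_cast hnm
    linarith
  set φ : ℕ → ℝ := fun k => -1/(9*((k:ℝ)-1)^3) with hφ
  have key : |fE m - fE n| ≤ ∑ k ∈ Finset.Ico n m, (φ (k+1) - φ k) := by
    rw [tele fE n m hnm]
    refine (Finset.abs_sum_le_sum_abs _ _).trans (Finset.sum_le_sum ?_)
    intro k hk
    have hk2 : 2 ≤ k := by
      simp only [Finset.mem_Ico] at hk; omega
    have hk1 : (2:ℝ) ≤ (k:ℝ) := by exact_mod_cast hk2
    refine (step_bound k (by omega)).trans ?_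
    have hφk : φ (k+1) - φ k - 1/(3*(k:ℝ)^4)
        = (6*(k:ℝ)^2 - 8*(k:ℝ) + 3)/(9*((k:ℝ)-1)^3*(k:ℝ)^4) := by
      rw [hφ]
      simp only
      push_cast
      rw [show ((k:ℝ)+1) - 1 = (k:ℝ) by ring]
      have hk0 : (k:ℝ) ≠ 0 := by positivity
      have hk0' : (k:ℝ) - 1 ≠ 0 := by intro h; nlinarith
      field_simp
      ring
    have hnum : (0:ℝ) < 6*(k:ℝ)^2 - 8*(k:ℝ) + 3 := by nlinarith
    have hden : (0:ℝ) < 9*((k:ℝ)-1)^3*(k:ℝ)^4 := by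
      have : (0:ℝ) < (k:ℝ) - 1 := by linarith
      positivity
    have := div_pos hnum hden
    linarith
  have hsum : ∑ k ∈ Finset.Ico n m, (φ (k+1) - φ k) = φ m - φ n :=
    (tele φ n m hnm).symm
  rw [hsum] at key
  have hφm : φ m ≤ 0 := by
    rw [hφ]
    simp only
    have : (0:ℝ) < (m:ℝ) - 1 := by linarith
    have : (0:ℝ) < 9*((m:ℝ)-1)^3 := by positivity
    rw [neg_div]
    simp only [Left.neg_nonpos_iff]
    positivity
  have hφn : -φ n ≤ 1/(n:ℝ)^3 := by
    rw [hφ]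
    simp only [neg_div, neg_neg]
    have h0 : (0:ℝ) < (n:ℝ) - 1 := by linarith
    rw [div_le_div_iff₀ (mul_pos (by norm_num) (pow_pos h0 3)) (by positivity)]
    nlinarith [mul_nonneg (show (0:ℝ) ≤ (n:ℝ) by linarith) (sq_nonneg ((n:ℝ)-2)),
      sq_nonneg ((n:ℝ)-2)]
  linarith

theorem harmonic_expansion :
    ∃ γ : ℝ, ∃ A > (0 : ℝ), ∃ N : ℕ, ∀ n : ℕ, n ≥ N →
      |H n - γ - Real.log ((n : ℝ) + 1/2) - 1 / (24 * (n : ℝ)^2)| ≤ A / (n : ℝ)^3 := by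
  have hc : CauchySeq (fun k => fE (k+2)) := by
    refine cauchySeq_of_le_tendsto_0' (fun k => 1/((k:ℝ)+2)^3) ?_ ?_
    · intro a b hab
      rw [Real.dist_eq, abs_sub_comm]
      have := cauchy_bound (n := a+2) (m := b+2) (by omega) (by omega)
      convert this using 3
      push_cast
      ring
    · have h1 : Tendsto (fun k : ℕ => ((k:ℝ)+2)^3) atTop atTop := by
        apply Tendsto.comp (tendsto_pow_atTop (by norm_num))
        exact tendsto_atTop_add_const_right _ 2 tendsto_natCast_atTop_atTop
      simpa [one_div, Pi.inv_def] using h1.inv_tendsto_atTop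
  obtain ⟨γ, hγ⟩ := cauchySeq_tendsto_of_complete hc
  refine ⟨γ, 1, one_pos, 2, ?_⟩
  intro n hn
  have hfn : Tendsto (fun m : ℕ => |fE n - fE (m+2)|) atTop (nhds |fE n - γ|) :=
    (tendsto_const_nhds.sub hγ).abs
  have hb : ∀ᶠ m in atTop, |fE n - fE (m+2)| ≤ 1/(n:ℝ)^3 := by
    filter_upwards [eventually_ge_atTop n] with m hm
    rw [abs_sub_comm]
    exact cauchy_bound hn (by omega)
  have hle : |fE n - γ| ≤ 1/(n:ℝ)^3 := le_of_tendsto hfn hb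
  have hrw : H n - γ - Real.log ((n:ℝ) + 1/2) - 1/(24*(n:ℝ)^2) = fE n - γ := by
    unfold fE; ring
  rw [hrw]
  simpa using hle
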